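/- Projection for the copy mechanism: let p be a probability mass function on 𝒳 × 𝒴 and set Z = (X,Y), so that for x with p(x) > 0 the conditional distribution of Z given x is P_x(x',y') = 1[x'=x]·p(y'|x), and for y with p(y) > 0 it is P_y(x',y') = p(x'|y)·1[y'=y]. Let C_X ⊆ Δ(𝒳×𝒴) be the convex hull of {P_x : p(x) > 0}. Then for every y with p(y) > 0, the distribution r(x',y') = p(x'|y)·p(y'|x') (interpreting p(x'|y)·p(y'|x') as 0 when p(x'|y) = 0) belongs to C_X and attains the minimum of D(P_y‖·) over C_X; equivalently, for every α : 𝒳 → [0,1] with Σ_{x'} α(x') = 1, Σ_{x'} p(x'|y) log(p(x'|y)/(α(x')·p(y|x'))) ≥ Σ_{x'} p(x'|y) log(1/p(y|x')). -/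

import Mathlib

open scoped BigOperators

/-- `p` is a probability mass function on a finite type. -/
def IsPMF {α : Type*} [Fintype α] (p : α → ℝ) : Prop :=
  (∀ a, 0 ≤ p a) ∧ ∑ a, p a = 1

/-- Kullback–Leibler divergence `D(u‖v) = Σ u log (u/v)` (with the convention `0 log 0 = 0`),
`⊤` if absolute continuity fails, i.e. if `u a > 0 = v a` for some `a`. -/
noncomputable def klDiv {α : Type*} [Fintype α] (u v : α → ℝ) : EReal :=
  if ∀ a, 0 < u a → 0 < v a then ((∑ a, u a * Real.log (u a / v a) : ℝ) : EReal) else ⊤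

variable {𝓧 𝓨 : Type*} [Fintype 𝓧] [Fintype 𝓨] [DecidableEq 𝓧] [DecidableEq 𝓨]

/-- Marginal `p(x)`. -/
noncomputable def margX (p : 𝓧 × 𝓨 → ℝ) (x : 𝓧) : ℝ := ∑ y, p (x, y)

/-- Marginal `p(y)`. -/
noncomputable def margY (p : 𝓧 × 𝓨 → ℝ) (y : 𝓨) : ℝ := ∑ x, p (x, y)

/-- Conditional `p(y|x) = p(x,y)/p(x)`. -/
noncomputable def condYgX (p : 𝓧 × 𝓨 → ℝ) (x : 𝓧) (y : 𝓨) : ℝ := p (x, y) / margX p x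

/-- Conditional `p(x|y) = p(x,y)/p(y)`. -/
noncomputable def condXgY (p : 𝓧 × 𝓨 → ℝ) (y : 𝓨) (x : 𝓧) : ℝ := p (x, y) / margY p y

/-- For the copy mechanism `Z = (X,Y)`, the conditional distribution of `Z` given `X = x`:
`P_x(x',y') = 1[x'=x]·p(y'|x)`. -/
noncomputable def Pcondx (p : 𝓧 × 𝓨 → ℝ) (x : 𝓧) : 𝓧 × 𝓨 → ℝ :=
  fun t => (if t.1 = x then 1 else 0) * condYgX p x t.2

/-- For the copy mechanism `Z = (X,Y)`, the conditional distribution of `Z` given `Y = y`: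
`P_y(x',y') = p(x'|y)·1[y'=y]`. -/
noncomputable def Pcondy (p : 𝓧 × 𝓨 → ℝ) (y : 𝓨) : 𝓧 × 𝓨 → ℝ :=
  fun t => condXgY p y t.1 * (if t.2 = y then 1 else 0)

/-- `C_X ⊆ Δ(𝓧 × 𝓨)`: convex hull of `{P_x : p(x) > 0}`. -/
noncomputable def CXcopy (p : 𝓧 × 𝓨 → ℝ) : Set (𝓧 × 𝓨 → ℝ) :=
  convexHull ℝ {q | ∃ x, 0 < margX p x ∧ q = Pcondx p x}

/-- The distribution `r(x',y') = p(x'|y)·p(y'|x')` (equal to `0` when `p(x'|y) = 0`). -/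
noncomputable def rProj (p : 𝓧 × 𝓨 → ℝ) (y : 𝓨) : 𝓧 × 𝓨 → ℝ :=
  fun t => condXgY p y t.1 * condYgX p t.1 t.2

/- ### Auxiliary lemmas -/

private lemma pos_pos_of_mul_pos {a b : ℝ} (ha : 0 ≤ a) (hb : 0 ≤ b) (h : 0 < a * b) :
    0 < a ∧ 0 < b := by
  rcases mul_pos_iff.mp h with ⟨h1, h2⟩ | ⟨h1, h2⟩
  · exact ⟨h1, h2⟩
  · linarith

/-- Gibbs' inequality (finite version). -/
private lemma gibbs {𝓧 : Type*} [Fintype 𝓧] {u v : 𝓧 → ℝ}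
    (hu : ∀ x, 0 ≤ u x) (hv : ∀ x, 0 ≤ v x)
    (hu1 : ∑ x, u x = 1) (hv1 : ∑ x, v x ≤ 1)
    (hac : ∀ x, 0 < u x → 0 < v x) :
    0 ≤ ∑ x, u x * Real.log (u x / v x) := by
  classical
  set s := Finset.univ.filter (fun x => 0 < u x) with hs
  have hzero : ∀ x, x ∉ s → u x = 0 := by
    intro x hx
    have : ¬ 0 < u x := by simpa [hs] using hx
    linarith [hu x, not_lt.mp this]
  have hsub : ∀ f : 𝓧 → ℝ, (∀ x, u x = 0 → f x = 0) → ∑ x ∈ s, f x = ∑ x, f x := by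
    intro f hf
    refine Finset.sum_subset (Finset.subset_univ _) ?_
    intro x _ hx
    exact hf x (hzero x hx)
  have key : ∀ x ∈ s, u x - v x ≤ u x * Real.log (u x / v x) := by
    intro x hx
    have hux : 0 < u x := by simpa [hs] using hx
    have hvx : 0 < v x := hac x hux
    have h1 : Real.log (v x / u x) ≤ v x / u x - 1 :=
      Real.log_le_sub_one_of_pos (div_pos hvx hux)
    have h2 : Real.log (u x / v x) = - Real.log (v x / u x) := by
      rw [← Real.log_inv]
      congr 1
      field_simp
    have h3 : u x * (v x / u x) = v x := by field_simp
    rw [h2]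
    nlinarith [mul_le_mul_of_nonneg_left h1 hux.le]
  have hsu : ∑ x ∈ s, u x = 1 := by
    rw [hsub u (fun _ h => h)]; exact hu1
  have hsv : ∑ x ∈ s, v x ≤ 1 :=
    le_trans (Finset.sum_le_sum_of_subset_of_nonneg (Finset.subset_univ _)
      (fun x _ _ => hv x)) hv1
  have hmain : ∑ x, u x * Real.log (u x / v x) = ∑ x ∈ s, u x * Real.log (u x / v x) :=
    (hsub _ fun x h => by rw [h, zero_mul]).symm
  rw [hmain]
  calc (0 : ℝ) ≤ ∑ x ∈ s, (u x - v x) := by rw [Finset.sum_sub_distrib]; linarith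
    _ ≤ _ := Finset.sum_le_sum key

/-- Collapsing the KL divergence of `P_y` against a mixture to a sum over `𝓧`. -/
private lemma klDiv_collapse (p : 𝓧 × 𝓨 → ℝ) (y : 𝓨) (α : 𝓧 → ℝ) :
    klDiv (Pcondy p y) (fun t => α t.1 * condYgX p t.1 t.2) =
      klDiv (condXgY p y) (fun x' => α x' * condYgX p x' y) := by
  simp only [klDiv, Pcondy]
  have hcond : (∀ t : 𝓧 × 𝓨, 0 < condXgY p y t.1 * (if t.2 = y then 1 else 0) →
      0 < α t.1 * condYgX p t.1 t.2) ↔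
      ∀ x', 0 < condXgY p y x' → 0 < α x' * condYgX p x' y := by
    constructor
    · intro h x' hx'
      have := h (x', y) (by simpa using hx')
      simpa using this
    · rintro h ⟨x', y'⟩ ht
      by_cases hy' : y' = y
      · subst hy'
        exact h x' (by simpa using ht)
      · simp [hy'] at ht
  have hsum : (∑ t : 𝓧 × 𝓨, (condXgY p y t.1 * (if t.2 = y then 1 else 0)) *
      Real.log ((condXgY p y t.1 * (if t.2 = y then 1 else 0)) /
        (α t.1 * condYgX p t.1 t.2))) =
      ∑ x', condXgY p y x' * Real.log (condXgY p y x' / (α x' * condYgX p x' y)) := by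
    rw [Fintype.sum_prod_type]
    refine Finset.sum_congr rfl fun x' _ => ?_
    rw [Finset.sum_eq_single y]
    · simp
    · intro y' _ hy'; simp [hy']
    · intro h; exact absurd (Finset.mem_univ y) h
  by_cases hc : ∀ x', 0 < condXgY p y x' → 0 < α x' * condYgX p x' y
  · simp only [if_pos (hcond.mpr hc), if_pos hc, hsum]
  · simp only [if_neg hc]; exact if_neg (fun hh => hc (hcond.mp hh))

private lemma condXgY_nonneg {p : 𝓧 × 𝓨 → ℝ} (hp : IsPMF p) {y : 𝓨} (hy : 0 < margY p y)
    (x : 𝓧) : 0 ≤ condXgY p y x :=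
  div_nonneg (hp.1 _) hy.le

private lemma condYgX_nonneg {p : 𝓧 × 𝓨 → ℝ} (hp : IsPMF p) (x : 𝓧) (y : 𝓨) :
    0 ≤ condYgX p x y :=
  div_nonneg (hp.1 _) (Finset.sum_nonneg fun y' _ => hp.1 (x, y'))

private lemma condXgY_sum_one {p : 𝓧 × 𝓨 → ℝ} {y : 𝓨} (hy : 0 < margY p y) :
    ∑ x, condXgY p y x = 1 := by
  have : ∑ x, condXgY p y x = (∑ x, p (x, y)) / margY p y := by
    rw [Finset.sum_div]; rfl
  rw [this]
  exact div_self hy.ne'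

private lemma margX_pos_of_condXgY_pos {p : 𝓧 × 𝓨 → ℝ} (hp : IsPMF p) {y : 𝓨}
    (hy : 0 < margY p y) {x : 𝓧} (hx : 0 < condXgY p y x) : 0 < margX p x := by
  have hpxy : 0 < p (x, y) := by
    have h : p (x, y) = condXgY p y x * margY p y := by
      rw [condXgY]; field_simp
    rw [h]; exact mul_pos hx hy
  exact lt_of_lt_of_le hpxy (Finset.single_le_sum (fun y' _ => hp.1 (x, y')) (Finset.mem_univ y))

private lemma condYgX_pos {p : 𝓧 × 𝓨 → ℝ} (hp : IsPMF p) {y : 𝓨} (hy : 0 < margY p y)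
    {x : 𝓧} (hx : 0 < condXgY p y x) : 0 < condYgX p x y := by
  have hmx : 0 < margX p x := margX_pos_of_condXgY_pos hp hy hx
  have hpxy : 0 < p (x, y) := by
    have h : p (x, y) = condXgY p y x * margY p y := by
      rw [condXgY]; field_simp
    rw [h]; exact mul_pos hx hy
  exact div_pos hpxy hmx

/-- Representation of elements of `CXcopy`. -/
private lemma CXcopy_repr [Nonempty 𝓧] {p : 𝓧 × 𝓨 → ℝ} {q : 𝓧 × 𝓨 → ℝ}
    (hq : q ∈ CXcopy p) :
    ∃ α : 𝓧 → ℝ, (∀ x, 0 ≤ α x) ∧ (∑ x, α x = 1) ∧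
      ∀ t, q t = α t.1 * condYgX p t.1 t.2 := by
  classical
  rw [CXcopy, convexHull_eq] at hq
  obtain ⟨ι, t, w, z, hw0, hw1, hz, hq⟩ := hq
  choose! g hg1 hg2 using hz
  refine ⟨fun x => ∑ i ∈ t.filter (fun i => g i = x), w i, ?_, ?_, ?_⟩
  · intro x
    exact Finset.sum_nonneg fun i hi => hw0 i (Finset.mem_filter.mp hi).1
  · rw [Finset.sum_fiberwise t g w]; exact hw1
  · intro t'
    rw [← hq, Finset.centerMass_eq_of_sum_1 _ _ hw1]
    calc (∑ i ∈ t, w i • z i) t' = ∑ i ∈ t, w i * z i t' := by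
          rw [Finset.sum_apply]; rfl
      _ = ∑ i ∈ t, (if g i = t'.1 then w i * condYgX p t'.1 t'.2 else 0) := by
          refine Finset.sum_congr rfl fun i hi => ?_
          rw [hg2 i hi, Pcondx]
          by_cases h : g i = t'.1
          · rw [if_pos h, if_pos h.symm, one_mul, h]
          · rw [if_neg h, if_neg (fun hh => h hh.symm), zero_mul, mul_zero]
      _ = ∑ i ∈ t.filter (fun i => g i = t'.1), w i * condYgX p t'.1 t'.2 :=
          (Finset.sum_filter _ _).symm
      _ = (∑ i ∈ t.filter (fun i => g i = t'.1), w i) * condYgX p t'.1 t'.2 := by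
          rw [Finset.sum_mul]

/-- `rProj p y` belongs to `CXcopy p`. -/
private lemma rProj_mem {p : 𝓧 × 𝓨 → ℝ} (hp : IsPMF p) {y : 𝓨} (hy : 0 < margY p y) :
    rProj p y ∈ CXcopy p := by
  classical
  set s := Finset.univ.filter (fun x => 0 < condXgY p y x) with hs
  have hzero : ∀ x, x ∉ s → condXgY p y x = 0 := by
    intro x hx
    have : ¬ 0 < condXgY p y x := by simpa [hs] using hx
    linarith [condXgY_nonneg hp hy x, not_lt.mp this]
  have hsum_s : ∑ x ∈ s, condXgY p y x = 1 := by
    rw [Finset.sum_subset (Finset.subset_univ s) (fun x _ hx => hzero x hx)]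
    exact condXgY_sum_one hy
  have hmem : Finset.centerMass s (condXgY p y) (fun x => Pcondx p x) ∈ CXcopy p := by
    apply Finset.centerMass_mem_convexHull
    · intro i _; exact condXgY_nonneg hp hy i
    · rw [hsum_s]; norm_num
    · intro i hi
      have hui : 0 < condXgY p y i := by simpa [hs] using hi
      exact ⟨i, margX_pos_of_condXgY_pos hp hy hui, rfl⟩
  have heq : Finset.centerMass s (condXgY p y) (fun x => Pcondx p x) = rProj p y := by
    rw [Finset.centerMass_eq_of_sum_1 _ _ hsum_s]
    funext t'
    calc (∑ x ∈ s, condXgY p y x • Pcondx p x) t'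
        = ∑ x ∈ s, condXgY p y x * Pcondx p x t' := by
          rw [Finset.sum_apply]; rfl
      _ = ∑ x ∈ s, (if t'.1 = x then condXgY p y x * condYgX p x t'.2 else 0) := by
          refine Finset.sum_congr rfl fun x _ => ?_
          rw [Pcondx]
          by_cases h : t'.1 = x
          · rw [if_pos h, if_pos h, one_mul]
          · rw [if_neg h, if_neg h, zero_mul, mul_zero]
      _ = if t'.1 ∈ s then condXgY p y t'.1 * condYgX p t'.1 t'.2 else 0 :=
          Finset.sum_ite_eq s t'.1 _
      _ = rProj p y t' := by
          by_cases h : t'.1 ∈ s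
          · rw [if_pos h]; rfl
          · rw [if_neg h, rProj, hzero _ h, zero_mul]
  rw [← heq]; exact hmem

/-- The KL divergence of `P_y` from `rProj p y` as a real sum. -/
private lemma klDiv_rProj {p : 𝓧 × 𝓨 → ℝ} (hp : IsPMF p) {y : 𝓨} (hy : 0 < margY p y) :
    klDiv (Pcondy p y) (rProj p y) =
      ((∑ x', condXgY p y x' * Real.log (1 / condYgX p x' y) : ℝ) : EReal) := by
  have hr : rProj p y = fun t : 𝓧 × 𝓨 => condXgY p y t.1 * condYgX p t.1 t.2 := rfl
  rw [hr, klDiv_collapse, klDiv, if_pos]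
  · congr 1
    refine Finset.sum_congr rfl fun x _ => ?_
    rcases eq_or_lt_of_le (condXgY_nonneg hp hy x) with h0 | h0
    · simp [← h0]
    · have hb := condYgX_pos hp hy h0
      congr 2
      rw [← div_div, div_self h0.ne', one_div]
  · intro x hx
    exact mul_pos hx (condYgX_pos hp hy hx)

/-- The key inequality. -/
private lemma key_ineq {p : 𝓧 × 𝓨 → ℝ} (hp : IsPMF p) {y : 𝓨} (hy : 0 < margY p y)
    (α : 𝓧 → ℝ) (hα0 : ∀ x, 0 ≤ α x) (hα1 : ∑ x, α x = 1) :
    ((∑ x', condXgY p y x' * Real.log (1 / condYgX p x' y) : ℝ) : EReal) ≤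
      klDiv (condXgY p y) (fun x' => α x' * condYgX p x' y) := by
  rw [klDiv]
  split_ifs with h
  · rw [EReal.coe_le_coe_iff]
    have hsplit : ∀ x', condXgY p y x' *
        Real.log (condXgY p y x' / (α x' * condYgX p x' y)) =
        condXgY p y x' * Real.log (condXgY p y x' / α x') +
          condXgY p y x' * Real.log (1 / condYgX p x' y) := by
      intro x'
      rcases eq_or_lt_of_le (condXgY_nonneg hp hy x') with h0 | h0
      · simp [← h0]
      · obtain ⟨ha, hb⟩ := pos_pos_of_mul_pos (hα0 x') (condYgX_nonneg hp x' y) (h x' h0)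
        have harg : condXgY p y x' / (α x' * condYgX p x' y) =
            (condXgY p y x' / α x') * (1 / condYgX p x' y) := by
          field_simp
        rw [harg, ← mul_add, Real.log_mul (by positivity) (by positivity)]
    have hsum : (∑ x', condXgY p y x' *
        Real.log (condXgY p y x' / (α x' * condYgX p x' y))) =
        (∑ x', condXgY p y x' * Real.log (condXgY p y x' / α x')) +
          ∑ x', condXgY p y x' * Real.log (1 / condYgX p x' y) := by
      rw [← Finset.sum_add_distrib]
      exact Finset.sum_congr rfl fun x _ => hsplit x
    have hg : 0 ≤ ∑ x', condXgY p y x' * Real.log (condXgY p y x' / α x') := by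
      refine gibbs (condXgY_nonneg hp hy) hα0 (condXgY_sum_one hy) (le_of_eq hα1) ?_
      intro x hx
      exact (pos_pos_of_mul_pos (hα0 x) (condYgX_nonneg hp x y) (h x hx)).1
    rw [hsum]
    linarith
  · exact le_top

/-- Projection for the copy mechanism `Z = (X,Y)`: for every `y` with `p(y) > 0`, the
distribution `r(x',y') = p(x'|y)·p(y'|x')` belongs to `C_X` and attains the minimum of
`D(P_y‖·)` over `C_X`; equivalently, for every `α : 𝓧 → [0,1]` with `Σ α(x') = 1`,
`Σ_{x'} p(x'|y) log (p(x'|y)/(α(x')·p(y|x'))) ≥ Σ_{x'} p(x'|y) log (1/p(y|x'))`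
(the left-hand side being the KL-type expression, `+∞` if `α(x')·p(y|x') = 0 < p(x'|y)`). -/
theorem copy_mechanism_projection
    [Nonempty 𝓧] [Nonempty 𝓨]
    (p : 𝓧 × 𝓨 → ℝ) (hp : IsPMF p) :
    ∀ y, 0 < margY p y →
      rProj p y ∈ CXcopy p ∧
      klDiv (Pcondy p y) (rProj p y) = (⨅ q ∈ CXcopy p, klDiv (Pcondy p y) q) ∧
      ∀ α : 𝓧 → ℝ, (∀ x', 0 ≤ α x' ∧ α x' ≤ 1) → (∑ x', α x' = 1) →
        ((∑ x', condXgY p y x' * Real.log (1 / condYgX p x' y) : ℝ) : EReal) ≤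
          klDiv (condXgY p y) (fun x' => α x' * condYgX p x' y) := by
  intro y hy
  have hmem := rProj_mem hp hy
  refine ⟨hmem, ?_, fun α hα hαs => key_ineq hp hy α (fun x => (hα x).1) hαs⟩
  apply le_antisymm
  · refine le_iInf₂ fun q hq => ?_
    obtain ⟨α, hα0, hα1, hqt⟩ := CXcopy_repr hq
    rw [klDiv_rProj hp hy, show q = fun t : 𝓧 × 𝓨 => α t.1 * condYgX p t.1 t.2 from funext hqt,
      klDiv_collapse]
    exact key_ineq hp hy α hα0 hα1
  · exact iInf₂_le _ hmem
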